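/- Let {W_t} be a stochastic process with E[(W_t - W_s)⁴] = (2+q)(t-s)² + 2(1-q)s(t-s) for all 0 ≤ s < t, where q ∈ (-1,1). Then for any 0 ≤ S < T, a > 0, and any partition S = t₀ < t₁ < ... < t_n = T into n equal intervals, P(max_{1≤i≤n} |W_{t_i} - W_{t_{i-1}}| > a) ≤ (1/a⁴)[(2+q)(T-S)²/n + (1-q)(T² - S²)], and consequently the limsup as n → ∞ of the left side is at most (1-q)(T²-S²)/a⁴. -/

import Mathlib

open MeasureTheory

lemma markov4' {Ω : Type*} [MeasurableSpace Ω] (μ : Measure Ω) [IsProbabilityMeasure μ]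
    (X : Ω → ℝ) (hint : Integrable (fun ω => X ω ^ 4) μ) {a : ℝ} (ha : 0 < a) :
    μ {ω | a < |X ω|} ≤ ENNReal.ofReal ((1/a^4) * ∫ ω, X ω ^ 4 ∂μ) := by
  have hnn : 0 ≤ᵐ[μ] fun ω => X ω ^ 4 :=
    Filter.Eventually.of_forall fun ω => by positivity
  have hsub : {ω | a < |X ω|} ⊆ {ω | a^4 ≤ X ω ^ 4} := by
    intro ω h
    have h1 : a^4 < |X ω|^4 := pow_lt_pow_left₀ h ha.le (by norm_num)
    have h2 : |X ω|^4 = X ω ^ 4 := by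
      rw [← abs_pow, abs_of_nonneg (by positivity)]
    exact le_of_lt (h2 ▸ h1)
  have hM := mul_meas_ge_le_integral_of_nonneg hnn hint (a^4)
  have ha4 : (0:ℝ) < a^4 := by positivity
  calc μ {ω | a < |X ω|} ≤ μ {ω | a^4 ≤ X ω ^ 4} := measure_mono hsub
    _ = ENNReal.ofReal ((μ {ω | a^4 ≤ X ω ^ 4}).toReal) :=
        (ENNReal.ofReal_toReal (measure_ne_top μ _)).symm
    _ ≤ ENNReal.ofReal ((1/a^4) * ∫ ω, X ω ^ 4 ∂μ) := by
        apply ENNReal.ofReal_le_ofReal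
        rw [one_div, inv_mul_eq_div, le_div_iff₀ ha4, mul_comm]
        exact hM

lemma sum_aux (n : ℕ) : ∑ i ∈ Finset.Icc 1 n, ((i:ℝ) - 1) = (n:ℝ) * ((n:ℝ) - 1) / 2 := by
  induction n with
  | zero => simp
  | succ m ih =>
    rw [Finset.sum_Icc_succ_top (by norm_num), ih]
    push_cast
    ring

theorem stmt18 {Ω : Type*} [MeasurableSpace Ω] (μ : Measure Ω) [IsProbabilityMeasure μ]
    (W : ℝ → Ω → ℝ) (q : ℝ) (hq : q ∈ Set.Ioo (-1:ℝ) 1)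
    (hint : ∀ s t : ℝ, 0 ≤ s → s < t → Integrable (fun ω => (W t ω - W s ω)^4) μ)
    (hmom : ∀ s t : ℝ, 0 ≤ s → s < t →
      ∫ ω, (W t ω - W s ω)^4 ∂μ = (2+q)*(t-s)^2 + 2*(1-q)*s*(t-s))
    (S T a : ℝ) (hS : 0 ≤ S) (hST : S < T) (ha : 0 < a) :
    (∀ n : ℕ, 0 < n →
      μ {ω | ∃ i ∈ Finset.Icc 1 n,
          a < |W (S + i*(T-S)/n) ω - W (S + ((i:ℝ)-1)*(T-S)/n) ω|}
        ≤ ENNReal.ofReal ((1/a^4) * ((2+q)*(T-S)^2/n + (1-q)*(T^2-S^2)))) ∧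
    Filter.limsup (fun n : ℕ =>
        μ {ω | ∃ i ∈ Finset.Icc 1 n,
            a < |W (S + i*(T-S)/n) ω - W (S + ((i:ℝ)-1)*(T-S)/n) ω|})
      Filter.atTop ≤ ENNReal.ofReal ((1-q)*(T^2-S^2)/a^4) := by
  obtain ⟨hq1, hq2⟩ := hq
  have hTS : (0:ℝ) < T - S := sub_pos.mpr hST
  have ha4 : (0:ℝ) < a^4 := by positivity
  have key : ∀ n : ℕ, 0 < n →
      μ {ω | ∃ i ∈ Finset.Icc 1 n,
          a < |W (S + i*(T-S)/n) ω - W (S + ((i:ℝ)-1)*(T-S)/n) ω|}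
        ≤ ENNReal.ofReal ((1/a^4) * ((2+q)*(T-S)^2/n + (1-q)*(T^2-S^2))) := by
    intro n hn
    have hn' : (0:ℝ) < n := Nat.cast_pos.mpr hn
    set b : ℕ → ℝ := fun i =>
      (1/a^4) * ((2+q)*((T-S)/n)^2 + 2*(1-q)*(S + ((i:ℝ)-1)*(T-S)/n)*((T-S)/n)) with hb
    have hpt : ∀ i ∈ Finset.Icc 1 n,
        μ {ω | a < |W (S + i*(T-S)/n) ω - W (S + ((i:ℝ)-1)*(T-S)/n) ω|}
          ≤ ENNReal.ofReal (b i) := by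
      intro i hi
      obtain ⟨hi1, hi2⟩ := Finset.mem_Icc.mp hi
      have hi1' : (1:ℝ) ≤ (i:ℝ) := by exact_mod_cast hi1
      have hs0 : (0:ℝ) ≤ S + ((i:ℝ)-1)*(T-S)/n := by
        have : (0:ℝ) ≤ ((i:ℝ)-1)*(T-S)/n :=
          div_nonneg (mul_nonneg (by linarith) hTS.le) hn'.le
        linarith
      have hst : S + ((i:ℝ)-1)*(T-S)/n < S + i*(T-S)/n := by
        have h1 : ((i:ℝ)-1)*(T-S) < i*(T-S) := by nlinarith
        have := (div_lt_div_iff_of_pos_right hn').mpr h1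
        linarith
      have hmi := hmom _ _ hs0 hst
      have hdiff : (S + (i:ℝ)*(T-S)/n) - (S + ((i:ℝ)-1)*(T-S)/n) = (T-S)/n := by
        field_simp; ring
      rw [hdiff] at hmi
      have := markov4' μ (fun ω => W (S + i*(T-S)/n) ω - W (S + ((i:ℝ)-1)*(T-S)/n) ω)
        (hint _ _ hs0 hst) ha
      rw [hmi] at this
      exact this
    have hset : {ω | ∃ i ∈ Finset.Icc 1 n,
          a < |W (S + i*(T-S)/n) ω - W (S + ((i:ℝ)-1)*(T-S)/n) ω|}
        = ⋃ i ∈ Finset.Icc 1 n,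
          {ω | a < |W (S + i*(T-S)/n) ω - W (S + ((i:ℝ)-1)*(T-S)/n) ω|} := by
      ext ω; simp
    have hbnn : ∀ i ∈ Finset.Icc 1 n, 0 ≤ b i := by
      intro i hi
      obtain ⟨hi1, _⟩ := Finset.mem_Icc.mp hi
      have hi1' : (1:ℝ) ≤ (i:ℝ) := by exact_mod_cast hi1
      have hs0 : (0:ℝ) ≤ S + ((i:ℝ)-1)*(T-S)/n := by
        have : (0:ℝ) ≤ ((i:ℝ)-1)*(T-S)/n :=
          div_nonneg (mul_nonneg (by linarith) hTS.le) hn'.le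
        linarith
      have hd : (0:ℝ) ≤ (T-S)/n := div_nonneg hTS.le hn'.le
      rw [hb]
      have h2q : (0:ℝ) < 2 + q := by linarith
      have h1q : (0:ℝ) < 1 - q := by linarith
      positivity
    have hsum : ∑ i ∈ Finset.Icc 1 n, b i
        = (1/a^4) * ((2+q)*(T-S)^2/n + 2*(1-q)*S*(T-S)
            + (1-q)*(T-S)^2*(((n:ℝ)-1)/n)) := by
      have hrw : ∀ i ∈ Finset.Icc 1 n, b i
          = (1/a^4) * ((2+q)*((T-S)/n)^2 + 2*(1-q)*S*((T-S)/n))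
            + ((1/a^4) * (2*(1-q)*((T-S)/n)^2)) * ((i:ℝ)-1) := by
        intro i _; rw [hb]; ring
      rw [Finset.sum_congr rfl hrw, Finset.sum_add_distrib, Finset.sum_const,
        ← Finset.mul_sum, sum_aux, Nat.card_Icc]
      simp only [Nat.add_sub_cancel, nsmul_eq_mul]
      field_simp
    calc μ _ = μ (⋃ i ∈ Finset.Icc 1 n,
          {ω | a < |W (S + i*(T-S)/n) ω - W (S + ((i:ℝ)-1)*(T-S)/n) ω|}) := by rw [hset]
      _ ≤ ∑ i ∈ Finset.Icc 1 n,
          μ {ω | a < |W (S + i*(T-S)/n) ω - W (S + ((i:ℝ)-1)*(T-S)/n) ω|} :=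
        measure_biUnion_finset_le _ _
      _ ≤ ∑ i ∈ Finset.Icc 1 n, ENNReal.ofReal (b i) := Finset.sum_le_sum hpt
      _ = ENNReal.ofReal (∑ i ∈ Finset.Icc 1 n, b i) :=
        (ENNReal.ofReal_sum_of_nonneg hbnn).symm
      _ ≤ ENNReal.ofReal ((1/a^4) * ((2+q)*(T-S)^2/n + (1-q)*(T^2-S^2))) := by
        apply ENNReal.ofReal_le_ofReal
        rw [hsum]
        have h1q : (0:ℝ) < 1 - q := by linarith
        have hkey : 2*(1-q)*S*(T-S) + (1-q)*(T-S)^2*(((n:ℝ)-1)/n)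
            ≤ (1-q)*(T^2-S^2) := by
          have h1 : (1-q)*(T^2-S^2) = 2*(1-q)*S*(T-S) + (1-q)*(T-S)^2 := by ring
          have h2 : (1-q)*(T-S)^2*(((n:ℝ)-1)/n) ≤ (1-q)*(T-S)^2 := by
            have hle1 : ((n:ℝ)-1)/n ≤ 1 := by
              rw [div_le_one hn']; linarith
            exact mul_le_of_le_one_right (by positivity) hle1
          linarith
        have := mul_le_mul_of_nonneg_left
          (by linarith : (2+q)*(T-S)^2/n + (2*(1-q)*S*(T-S)
              + (1-q)*(T-S)^2*(((n:ℝ)-1)/n)) ≤ (2+q)*(T-S)^2/n + (1-q)*(T^2-S^2))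
          (le_of_lt (by positivity : (0:ℝ) < 1/a^4))
        linarith
  refine ⟨key, ?_⟩
  have hbdd : ∀ᶠ n : ℕ in Filter.atTop,
      μ {ω | ∃ i ∈ Finset.Icc 1 n,
          a < |W (S + i*(T-S)/n) ω - W (S + ((i:ℝ)-1)*(T-S)/n) ω|}
        ≤ ENNReal.ofReal ((1/a^4) * ((2+q)*(T-S)^2/n + (1-q)*(T^2-S^2))) := by
    filter_upwards [Filter.eventually_ge_atTop 1] with n hn
    exact key n hn
  have hlim : Filter.Tendsto
      (fun n : ℕ => ENNReal.ofReal ((1/a^4) * ((2+q)*(T-S)^2/n + (1-q)*(T^2-S^2))))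
      Filter.atTop (nhds (ENNReal.ofReal ((1-q)*(T^2-S^2)/a^4))) := by
    have h1 : Filter.Tendsto (fun n : ℕ => (2+q)*(T-S)^2/n) Filter.atTop (nhds 0) :=
      tendsto_const_div_atTop_nhds_zero_nat _
    have h2 : Filter.Tendsto
        (fun n : ℕ => (1/a^4) * ((2+q)*(T-S)^2/n + (1-q)*(T^2-S^2)))
        Filter.atTop (nhds ((1/a^4) * (0 + (1-q)*(T^2-S^2)))) :=
      ((h1.add_const _).const_mul _)
    have h3 := (ENNReal.continuous_ofReal.tendsto _).comp h2
    convert h3 using 2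
    all_goals simp only [Function.comp_apply, zero_add, one_div, inv_mul_eq_div]
  calc Filter.limsup _ Filter.atTop
      ≤ Filter.limsup (fun n : ℕ =>
          ENNReal.ofReal ((1/a^4) * ((2+q)*(T-S)^2/n + (1-q)*(T^2-S^2))))
        Filter.atTop := Filter.limsup_le_limsup hbdd
    _ = ENNReal.ofReal ((1-q)*(T^2-S^2)/a^4) := hlim.limsup_eq
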